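/- Let n ≥ 1 and let f ∈ ℝ[x₁,…,xₙ] be a homogeneous polynomial of degree d ≥ 1. If the set {v ∈ S^{n-1} : f(v) ≠ 0} has at least m connected components, then f has at least ⌈m/2⌉ distinct real eigenvectors, i.e., there are at least ⌈m/2⌉ distinct classes [v] ∈ ℝℙ^{n-1} with v a nonzero vector satisfying ∇f(v) = λv for some λ ∈ ℝ. -/

import Mathlib

open MvPolynomial

/-- The gradient of a polynomial `f ∈ ℝ[x₁,…,xₙ]` at a point `v ∈ ℝⁿ`. -/
noncomputable def grad {n : ℕ} (f : MvPolynomial (Fin n) ℝ) (v : Fin n → ℝ) : Fin n → ℝ :=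
  fun i => eval v (pderiv i f)

/-- The set of real eigenvectors of `f`, counted projectively. -/
def eigSet {n : ℕ} (f : MvPolynomial (Fin n) ℝ) :
    Set (Projectivization ℝ (Fin n → ℝ)) :=
  {p | ∃ (v : Fin n → ℝ) (hv : v ≠ 0) (lam : ℝ),
    p = Projectivization.mk ℝ v hv ∧ grad f v = lam • v}

noncomputable def gradL {n : ℕ} (f : MvPolynomial (Fin n) ℝ) (v : Fin n → ℝ) :
    (Fin n → ℝ) →L[ℝ] ℝ :=
  ∑ i, eval v (pderiv i f) • (ContinuousLinearMap.proj i : (Fin n → ℝ) →L[ℝ] ℝ)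

lemma hasStrictFDerivAt_eval {n : ℕ} (v : Fin n → ℝ) (f : MvPolynomial (Fin n) ℝ) :
    HasStrictFDerivAt (fun w => eval w f) (gradL f v) v := by
  induction f using MvPolynomial.induction_on with
  | C a =>
      have : gradL (C a : MvPolynomial (Fin n) ℝ) v = 0 := by
        simp [gradL]
      rw [this]
      simpa using hasStrictFDerivAt_const a v
  | add p q hp hq =>
      have : gradL (p + q) v = gradL p v + gradL q v := by
        simp [gradL, add_smul, Finset.sum_add_distrib]
      rw [this]
      exact (hp.add hq).congr_of_eventuallyEq (by filter_upwards with w; simp)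
  | mul_X p i hp =>
      have hproj : HasStrictFDerivAt (fun w : Fin n → ℝ => w i)
          (ContinuousLinearMap.proj i : (Fin n → ℝ) →L[ℝ] ℝ) v :=
        (ContinuousLinearMap.proj i : (Fin n → ℝ) →L[ℝ] ℝ).hasStrictFDerivAt
      have key := hp.mul hproj
      have : gradL (p * X i) v = eval v p • ContinuousLinearMap.proj i + v i • gradL p v := by
        classical
        simp only [gradL, pderiv_mul, pderiv_X, map_add, eval_mul, eval_X, add_smul]
        rw [Finset.sum_add_distrib, add_comm]
        congr 1
        · rw [Finset.sum_eq_single i]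
          · simp
          · intro j _ hj
            simp [Pi.single_apply, hj]
          · simp
        · rw [Finset.smul_sum]
          refine Finset.sum_congr rfl fun j _ => ?_
          rw [smul_smul, mul_comm]
      rw [this]
      exact key.congr_of_eventuallyEq (by filter_upwards with w; simp)

lemma gradL_apply_single {n : ℕ} (c : Fin n → ℝ) (j : Fin n) :
    (∑ k, c k • (ContinuousLinearMap.proj k : (Fin n → ℝ) →L[ℝ] ℝ)) (Pi.single j 1) = c j := by
  classical
  rw [ContinuousLinearMap.sum_apply, Finset.sum_eq_single j]
  · simp
  · intro k _ hk
    simp [Pi.single_apply, hk.symm]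
  · simp

lemma exists_eig {n : ℕ} (f : MvPolynomial (Fin n) ℝ) (x₀ : Fin n → ℝ)
    (hx : x₀ ∈ {v : Fin n → ℝ | (∑ k, v k ^ 2 = 1) ∧ eval v f ≠ 0}) :
    ∃ v : Fin n → ℝ,
      v ∈ connectedComponentIn {v : Fin n → ℝ | (∑ k, v k ^ 2 = 1) ∧ eval v f ≠ 0} x₀ ∧
      ∃ hv : v ≠ 0, Projectivization.mk ℝ v hv ∈ eigSet f := by
  classical
  set A := {v : Fin n → ℝ | (∑ k, v k ^ 2 = 1) ∧ eval v f ≠ 0} with hA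
  set C := connectedComponentIn A x₀ with hC
  have hevalc : Continuous fun w : Fin n → ℝ => eval w f :=
    continuous_iff_continuousAt.2 fun w => (hasStrictFDerivAt_eval w f).continuousAt
  have hsumc : Continuous fun w : Fin n → ℝ => ∑ k, w k ^ 2 := by fun_prop
  set g := fun w : Fin n → ℝ => eval w f * eval w f with hg
  have hgc : Continuous g := hevalc.mul hevalc
  have hSclosed : IsClosed {v : Fin n → ℝ | ∑ k, v k ^ 2 = 1} :=
    isClosed_eq hsumc continuous_const
  have hAsub : A ⊆ {v : Fin n → ℝ | ∑ k, v k ^ 2 = 1} := fun v hv => hv.1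
  have hballS : {v : Fin n → ℝ | ∑ k, v k ^ 2 = 1} ⊆ Metric.closedBall 0 1 := by
    intro v hv
    rw [Metric.mem_closedBall, dist_zero_right]
    refine (pi_norm_le_iff_of_nonneg zero_le_one).2 fun k => ?_
    rw [Real.norm_eq_abs]
    have h1 : v k ^ 2 ≤ 1 := hv ▸ Finset.single_le_sum
      (fun k _ => sq_nonneg (v k)) (Finset.mem_univ k)
    exact (sq_le_one_iff_abs_le_one (v k)).1 h1
  have hCsub : C ⊆ A := connectedComponentIn_subset A x₀
  have hx₀C : x₀ ∈ C := mem_connectedComponentIn hx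
  have hclos_comp : IsCompact (closure C) :=
    (isCompact_closedBall (0 : Fin n → ℝ) 1).of_isClosed_subset isClosed_closure
      (closure_minimal (hCsub.trans (hAsub.trans hballS)) Metric.isClosed_closedBall)
  obtain ⟨v, hvclos, hvmax⟩ :=
    hclos_comp.exists_isMaxOn ⟨x₀, subset_closure hx₀C⟩ hgc.continuousOn
  have hclosS : closure C ⊆ {v : Fin n → ℝ | ∑ k, v k ^ 2 = 1} :=
    closure_minimal (hCsub.trans hAsub) hSclosed
  have hvS : ∑ k, v k ^ 2 = 1 := hclosS hvclos
  have hgv_pos : 0 < g v :=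
    lt_of_lt_of_le (mul_self_pos.2 hx.2) (hvmax (subset_closure hx₀C))
  have hfv : eval v f ≠ 0 := fun h => by simp [hg, h] at hgv_pos
  have hvA : v ∈ A := ⟨hvS, hfv⟩
  have hvC : v ∈ C := by
    have hconn : IsPreconnected (C ∪ {v}) := by
      refine IsPreconnected.subset_closure isPreconnected_connectedComponentIn
        Set.subset_union_left (Set.union_subset subset_closure ?_)
      simpa using hvclos
    have hsub : C ∪ {v} ⊆ C :=
      hconn.subset_connectedComponentIn (Set.mem_union_left _ hx₀C)
        (Set.union_subset hCsub (by simpa using hvA))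
    exact hsub (Set.mem_union_right _ rfl)
  -- radial retraction
  set r := fun w : Fin n → ℝ => (Real.sqrt (∑ k, w k ^ 2))⁻¹ • w with hr
  have hrv : r v = v := by simp [hr, hvS]
  have hev : ∀ᶠ w in nhds v, 0 < ∑ k, w k ^ 2 ∧ eval (r w) f ≠ 0 := by
    have h1 : ∀ᶠ w in nhds v, 0 < ∑ k, w k ^ 2 := by
      have ht : Filter.Tendsto (fun w : Fin n → ℝ => ∑ k, w k ^ 2) (nhds v) (nhds 1) := by
        have := hsumc.continuousAt (x := v)
        rwa [ContinuousAt, hvS] at this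
      exact ht.eventually (eventually_gt_nhds one_pos)
    have hcontr : ContinuousAt r v := by
      refine ContinuousAt.smul (f := fun w : Fin n → ℝ => (Real.sqrt (∑ k, w k ^ 2))⁻¹) (g := id) (ContinuousAt.inv₀ (f := fun w : Fin n → ℝ => Real.sqrt (∑ k, w k ^ 2)) ?_ ?_) continuousAt_id
      · exact Real.continuous_sqrt.continuousAt.comp hsumc.continuousAt
      · simp [hvS]
    have hcontF : ContinuousAt (fun w => eval (r w) f) v := by
      have := (hevalc.continuousAt (x := r v)).comp hcontr
      exact this
    have h2 : ∀ᶠ w in nhds v, eval (r w) f ≠ 0 :=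
      hcontF.eventually_ne (by rw [hrv]; exact hfv)
    exact h1.and h2
  obtain ⟨ε, hε, hball2⟩ := Metric.eventually_nhds_iff.1 hev
  have hrcont : ContinuousOn r (Metric.ball v ε) := by
    intro w hw
    apply ContinuousAt.continuousWithinAt
    have hpos := (hball2 (by simpa [Metric.mem_ball] using hw)).1
    refine ContinuousAt.smul (f := fun w : Fin n → ℝ => (Real.sqrt (∑ k, w k ^ 2))⁻¹) (g := id) (ContinuousAt.inv₀ (f := fun w : Fin n → ℝ => Real.sqrt (∑ k, w k ^ 2)) ?_ ?_) continuousAt_id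
    · exact Real.continuous_sqrt.continuousAt.comp hsumc.continuousAt
    · exact (Real.sqrt_pos.2 hpos).ne'
  have hKconn : IsPreconnected (r '' Metric.ball v ε) :=
    (convex_ball v ε).isPreconnected.image r hrcont
  have hKA : r '' Metric.ball v ε ⊆ A := by
    rintro _ ⟨w, hw, rfl⟩
    obtain ⟨hpos, hne⟩ := hball2 (by simpa [Metric.mem_ball] using hw)
    refine ⟨?_, hne⟩
    have hs : Real.sqrt (∑ k, w k ^ 2) ^ 2 = ∑ k, w k ^ 2 := Real.sq_sqrt hpos.le
    have : ∑ k, (r w) k ^ 2 = ((Real.sqrt (∑ k, w k ^ 2))⁻¹) ^ 2 * ∑ k, w k ^ 2 := by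
      simp [hr, mul_pow, Finset.mul_sum]
    rw [this, inv_pow, hs, inv_mul_cancel₀ hpos.ne']
  have hKC : r '' Metric.ball v ε ⊆ C := by
    have h1 : r '' Metric.ball v ε ⊆ connectedComponentIn A v :=
      hKconn.subset_connectedComponentIn ⟨v, Metric.mem_ball_self hε, hrv⟩ hKA
    rwa [← connectedComponentIn_eq hvC] at h1
  have hlocmax : IsLocalMaxOn g
      {w : Fin n → ℝ | ∑ k, w k ^ 2 = ∑ k, v k ^ 2} v := by
    have hBmem : Metric.ball v ε ∈ nhdsWithin v {w : Fin n → ℝ | ∑ k, w k ^ 2 = ∑ k, v k ^ 2} :=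
      nhdsWithin_le_nhds (Metric.ball_mem_nhds v hε)
    filter_upwards [hBmem, self_mem_nhdsWithin] with w hwB hwS
    have hwsum : ∑ k, w k ^ 2 = 1 := by rw [hwS, hvS]
    have hwC : w ∈ C := hKC ⟨w, hwB, by simp [hr, hwsum]⟩
    exact hvmax (subset_closure hwC)
  -- Lagrange multipliers
  have hsq : HasStrictFDerivAt (fun w : Fin n → ℝ => ∑ k, w k ^ 2)
      (∑ k, (2 * v k) • (ContinuousLinearMap.proj k : (Fin n → ℝ) →L[ℝ] ℝ)) v := by
    have h : ∀ k ∈ Finset.univ, HasStrictFDerivAt (fun w : Fin n → ℝ => w k ^ 2)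
        ((2 * v k) • (ContinuousLinearMap.proj k : (Fin n → ℝ) →L[ℝ] ℝ)) v := by
      intro k _
      have hk : HasStrictFDerivAt (fun w : Fin n → ℝ => w k)
          (ContinuousLinearMap.proj k : (Fin n → ℝ) →L[ℝ] ℝ) v :=
        (ContinuousLinearMap.proj k : (Fin n → ℝ) →L[ℝ] ℝ).hasStrictFDerivAt
      have h2 := hk.mul hk
      have hfun : (fun w : Fin n → ℝ => w k ^ 2) = fun w => w k * w k := by
        funext w; ring
      rw [hfun]
      rw [two_mul, add_smul]
      exact h2
    exact HasStrictFDerivAt.fun_sum h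
  have hgderiv : HasStrictFDerivAt g (eval v f • gradL f v + eval v f • gradL f v) v :=
    (hasStrictFDerivAt_eval v f).mul (hasStrictFDerivAt_eval v f)
  have hextr : IsLocalExtrOn g {w : Fin n → ℝ | ∑ k, w k ^ 2 = ∑ k, v k ^ 2} v :=
    Or.inr hlocmax
  obtain ⟨a, b, hab, heq⟩ := hextr.exists_multipliers_of_hasStrictFDerivAt_1d hsq hgderiv
  have heval : ∀ j, a * (2 * v j)
      + b * (2 * (eval v f * eval v (pderiv j f))) = 0 := by
    intro j
    have h0 := DFunLike.congr_fun heq (Pi.single j (1 : ℝ))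
    have hS : (∑ k, (2 * v k) • (ContinuousLinearMap.proj k : (Fin n → ℝ) →L[ℝ] ℝ))
        (Pi.single j 1) = 2 * v j := gradL_apply_single (fun k => 2 * v k) j
    have hD : gradL f v (Pi.single j 1) = eval v (pderiv j f) :=
      gradL_apply_single (fun i => eval v (pderiv i f)) j
    simp only [ContinuousLinearMap.add_apply, ContinuousLinearMap.smul_apply,
      ContinuousLinearMap.zero_apply, smul_eq_mul, hS, hD] at h0
    linear_combination h0
  have hbne : b ≠ 0 := by
    intro hb0
    have hane : a ≠ 0 := by
      intro ha0
      exact hab (by simp [ha0, hb0, Prod.ext_iff])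
    have hvz : ∀ j, v j = 0 := by
      intro j
      have h := heval j
      rw [hb0] at h
      have h' : a * (2 * v j) = 0 := by linarith
      have := (mul_eq_zero.1 h').resolve_left hane
      linarith
    have hz : ∑ k, v k ^ 2 = 0 := Finset.sum_eq_zero fun k _ => by rw [hvz k]; ring
    rw [hz] at hvS
    norm_num at hvS
  have hv0 : v ≠ 0 := by
    intro h
    rw [h] at hvS
    simp at hvS
  refine ⟨v, hvC, hv0, v, hv0, -a / (b * eval v f), rfl, ?_⟩
  funext j
  have h := heval j
  have hbf : b * eval v f ≠ 0 := mul_ne_zero hbne hfv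
  have hgoal : eval v (pderiv j f) = -a / (b * eval v f) * v j := by
    rw [div_mul_eq_mul_div, eq_div_iff hbf]
    linear_combination h / 2
  simpa [grad, Pi.smul_apply, smul_eq_mul] using hgoal

/-- If `{v ∈ S^{n-1} : f(v) ≠ 0}` has at least `m` connected components (witnessed by
`m` points lying in pairwise distinct components), then the homogeneous polynomial `f`
has at least `⌈m/2⌉` distinct real eigenvectors, counted projectively. -/
theorem eigenvectors_ge_half_components
    {n : ℕ} (hn : 1 ≤ n) {d : ℕ} (hd : 1 ≤ d) (f : MvPolynomial (Fin n) ℝ)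
    (hf : f.IsHomogeneous d) (m : ℕ) (x : Fin m → (Fin n → ℝ))
    (hx : ∀ i, x i ∈ {v : Fin n → ℝ | (∑ k, v k ^ 2 = 1) ∧ eval v f ≠ 0})
    (hdistinct : ∀ i j, i ≠ j →
      connectedComponentIn {v : Fin n → ℝ | (∑ k, v k ^ 2 = 1) ∧ eval v f ≠ 0} (x i) ≠
      connectedComponentIn {v : Fin n → ℝ | (∑ k, v k ^ 2 = 1) ∧ eval v f ≠ 0} (x j)) :
    ∃ T : Finset (Projectivization ℝ (Fin n → ℝ)),
      (m + 1) / 2 ≤ T.card ∧ ∀ p ∈ T, p ∈ eigSet f := by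
  classical
  set A := {v : Fin n → ℝ | (∑ k, v k ^ 2 = 1) ∧ eval v f ≠ 0} with hA
  choose v hvC hv0 hveig using fun i => exists_eig f (x i) (hx i)
  set φ := fun i => Projectivization.mk ℝ (v i) (hv0 i) with hφ
  refine ⟨Finset.univ.image φ, ?_, ?_⟩
  · have hsum : ∀ i, ∑ k, (v i) k ^ 2 = 1 :=
      fun i => ((connectedComponentIn_subset A (x i)) (hvC i)).1
    have hvinj : ∀ i j, v i = v j → i = j := by
      intro i j hij
      by_contra hne
      apply hdistinct i j hne
      calc connectedComponentIn A (x i)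
          = connectedComponentIn A (v i) := connectedComponentIn_eq (hvC i)
        _ = connectedComponentIn A (v j) := by rw [hij]
        _ = connectedComponentIn A (x j) := (connectedComponentIn_eq (hvC j)).symm
    have hcard : m ≤ 2 * (Finset.univ.image φ).card := by
      have hmain := Finset.card_le_mul_card_image (f := φ) Finset.univ 2 ?_
      · simpa using hmain
      intro p hp
      obtain ⟨i₀, hi₀mem⟩ : ({a ∈ Finset.univ | φ a = p} : Finset (Fin m)).Nonempty := by
        rw [Finset.mem_image] at hp
        obtain ⟨i, _, hip⟩ := hp
        exact ⟨i, by simp [hip]⟩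
      set s : Finset (Fin m) := {a ∈ Finset.univ | φ a = p} with hs
      have hi₀p : φ i₀ = p := by
        simp only [hs, Finset.mem_filter] at hi₀mem
        exact hi₀mem.2
      have hmem : ∀ j ∈ s, v j = v i₀ ∨ v j = -v i₀ := by
        intro j hj
        have hjp : φ j = φ i₀ := by
          simp only [hs, Finset.mem_filter] at hj
          rw [hj.2, hi₀p]
        obtain ⟨c, hc⟩ := (Projectivization.mk_eq_mk_iff' ℝ _ _ _ _).1 hjp
        have hc2 : c ^ 2 = 1 := by
          have h1 := hsum j
          rw [← hc] at h1
          have h3 : ∑ k, (c • v i₀) k ^ 2 = c ^ 2 * ∑ k, (v i₀) k ^ 2 := by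
            simp [Finset.mul_sum, mul_pow]
          rw [h3, hsum i₀, mul_one] at h1
          exact h1
        have hcc : (c - 1) * (c + 1) = 0 := by linear_combination hc2
        rcases mul_eq_zero.1 hcc with h | h
        · left
          have : c = 1 := by linarith
          rw [← hc, this, one_smul]
        · right
          have : c = -1 := by linarith
          rw [← hc, this]
          ext k
          simp
      have hinj : Set.InjOn v s := fun i _ j _ hij => hvinj i j hij
      calc s.card = (s.image v).card := (Finset.card_image_of_injOn hinj).symm
        _ ≤ ({v i₀, -v i₀} : Finset (Fin n → ℝ)).card := by
            apply Finset.card_le_card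
            intro w hw
            rw [Finset.mem_image] at hw
            obtain ⟨j, hj, rfl⟩ := hw
            rcases hmem j hj with h | h <;> simp [h]
        _ ≤ 2 := (Finset.card_insert_le _ _).trans (by simp)
    omega
  · intro p hp
    rw [Finset.mem_image] at hp
    obtain ⟨i, _, hip⟩ := hp
    rw [← hip]
    exact hveig i
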